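/- Equivariance of leapfrog under affine reparametrisation: let T(ξ) = Jξ + b with J invertible. Define transformed coordinates ξ = J⁻¹(θ − b), momenta p_ξ = Jᵀ p_θ, potential U_ξ(ξ) = U(Jξ + b) and mass matrix M_ξ = Jᵀ M J. Then one leapfrog step of size ε in (ξ, p_ξ) coordinates, mapped back to (θ, p_θ) via θ = Jξ + b and p_θ = J⁻ᵀ p_ξ, coincides with one leapfrog step of size ε applied directly in (θ, p_θ) coordinates with potential U and mass matrix M. -/

import Mathlib

open Matrix

/-- One leapfrog step of size ε with potential `V` and inverse mass matrix
`Ninv`: p½ = p − (ε/2)∇V(x); x' = x + ε N⁻¹ p½; p' = p½ − (ε/2)∇V(x'). -/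
noncomputable def leapfrogStep {d : ℕ} (V : EuclideanSpace ℝ (Fin d) → ℝ)
    (Ninv : Matrix (Fin d) (Fin d) ℝ) (ε : ℝ)
    (p : EuclideanSpace ℝ (Fin d) × EuclideanSpace ℝ (Fin d)) :
    EuclideanSpace ℝ (Fin d) × EuclideanSpace ℝ (Fin d) :=
  let ph := p.2 - (ε / 2) • gradient V p.1
  let x' := p.1 + ε • (Matrix.toEuclideanLin Ninv) ph
  (x', ph - (ε / 2) • gradient V x')

lemma toEuclideanLin_mul_apply {d : ℕ} (A B : Matrix (Fin d) (Fin d) ℝ)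
    (x : EuclideanSpace ℝ (Fin d)) :
    Matrix.toEuclideanLin (A * B) x = Matrix.toEuclideanLin A (Matrix.toEuclideanLin B x) := by
  simp [Matrix.toEuclideanLin_apply, Matrix.mulVec_mulVec]

lemma toEuclideanLin_one_apply {d : ℕ} (x : EuclideanSpace ℝ (Fin d)) :
    Matrix.toEuclideanLin (1 : Matrix (Fin d) (Fin d) ℝ) x = x := by
  simp [Matrix.toEuclideanLin_apply]

lemma gradient_affine_comp {d : ℕ} (U : EuclideanSpace ℝ (Fin d) → ℝ)
    (hU : Differentiable ℝ U) (J : Matrix (Fin d) (Fin d) ℝ)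
    (b ξ : EuclideanSpace ℝ (Fin d)) :
    gradient (fun ξ => U ((Matrix.toEuclideanLin J) ξ + b)) ξ
      = Matrix.toEuclideanLin Jᵀ (gradient U ((Matrix.toEuclideanLin J) ξ + b)) := by
  set L := Matrix.toEuclideanLin J
  set y := L ξ + b
  have hg : HasGradientAt U (gradient U y) y := (hU y).hasGradientAt
  have hA : HasFDerivAt (fun ξ : EuclideanSpace ℝ (Fin d) => L ξ + b)
      (LinearMap.toContinuousLinearMap L) ξ :=
    ((LinearMap.toContinuousLinearMap L).hasFDerivAt).add_const b
  have hcomp : HasFDerivAt (fun ξ => U (L ξ + b))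
      ((InnerProductSpace.toDual ℝ _ (gradient U y)).comp
        (LinearMap.toContinuousLinearMap L)) ξ :=
    hg.hasFDerivAt.comp ξ hA
  have := hcomp.hasGradientAt.gradient
  rw [this]
  apply ext_inner_right ℝ
  intro v
  have hadj : Matrix.toEuclideanLin Jᵀ = LinearMap.adjoint L := by
    have := Matrix.toEuclideanLin_conjTranspose_eq_adjoint J
    simpa [Matrix.conjTranspose_eq_transpose_of_trivial] using this
  rw [InnerProductSpace.toDual_symm_apply, hadj, LinearMap.adjoint_inner_left]
  simp [InnerProductSpace.toDual_apply_apply]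

/-- Equivariance of leapfrog under affine reparametrisation
T(ξ) = Jξ + b: a leapfrog step of size ε in the transformed coordinates
ξ = J⁻¹(θ − b), p_ξ = Jᵀ p_θ, with potential U_ξ(ξ) = U(Jξ + b) and mass
matrix M_ξ = Jᵀ M J, mapped back via θ = Jξ + b and p_θ = J⁻ᵀ p_ξ, coincides
with a leapfrog step of size ε applied directly with potential U and mass
matrix M. -/
theorem leapfrog_affine_equivariance {d : ℕ}
    (U : EuclideanSpace ℝ (Fin d) → ℝ) (hU : Differentiable ℝ U)
    (M J : Matrix (Fin d) (Fin d) ℝ) (hM : M.PosDef) (hJ : IsUnit J.det)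
    (b : EuclideanSpace ℝ (Fin d)) (ε : ℝ)
    (Uξ : EuclideanSpace ℝ (Fin d) → ℝ)
    (hUξ : ∀ ξ, Uξ ξ = U ((Matrix.toEuclideanLin J) ξ + b))
    (Mξ : Matrix (Fin d) (Fin d) ℝ) (hMξ : Mξ = Jᵀ * M * J)
    (θ p : EuclideanSpace ℝ (Fin d)) :
    leapfrogStep U M⁻¹ ε (θ, p) =
      (fun q : EuclideanSpace ℝ (Fin d) × EuclideanSpace ℝ (Fin d) =>
          ((Matrix.toEuclideanLin J) q.1 + b, (Matrix.toEuclideanLin (J⁻¹)ᵀ) q.2))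
        (leapfrogStep Uξ Mξ⁻¹ ε
          ((Matrix.toEuclideanLin J⁻¹) (θ - b), (Matrix.toEuclideanLin Jᵀ) p)) := by

  have hUξ' : Uξ = fun ξ => U ((Matrix.toEuclideanLin J) ξ + b) := funext hUξ
  subst hUξ' hMξ
  set L := fun A : Matrix (Fin d) (Fin d) ℝ => Matrix.toEuclideanLin A with hL
  have hJJ : J * J⁻¹ = 1 := Matrix.mul_nonsing_inv J hJ
  have hJJ' : J⁻¹ * J = 1 := Matrix.nonsing_inv_mul J hJ
  have hTT : (J⁻¹)ᵀ * Jᵀ = 1 := by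
    rw [← Matrix.transpose_mul, hJJ, Matrix.transpose_one]
  have hMinv : (Jᵀ * M * J)⁻¹ = J⁻¹ * M⁻¹ * (J⁻¹)ᵀ := by
    rw [Matrix.mul_inv_rev, Matrix.mul_inv_rev, ← Matrix.transpose_nonsing_inv, mul_assoc]
  -- abbreviations
  set θξ := L J⁻¹ (θ - b) with hθξ
  have hθ : L J θξ + b = θ := by
    rw [hθξ, hL]
    rw [← toEuclideanLin_mul_apply, hJJ, toEuclideanLin_one_apply, sub_add_cancel]
  set g := gradient U θ with hg
  set ph := p - (ε / 2) • g with hph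
  set x' := θ + ε • L M⁻¹ ph with hx'
  have hgrad1 : gradient (fun ξ => U ((Matrix.toEuclideanLin J) ξ + b)) θξ = L Jᵀ g := by
    rw [gradient_affine_comp U hU J b θξ, hθ]
  have hphξ : L Jᵀ p - (ε / 2) • L Jᵀ g = L Jᵀ ph := by
    rw [hph, map_sub, _root_.map_smul]
  -- the transformed half-step position maps back to x'
  have hmass : ∀ v, L (Jᵀ * M * J)⁻¹ (L Jᵀ v) = L (J⁻¹ * M⁻¹) v := by
    intro v
    rw [hL, ← toEuclideanLin_mul_apply, hMinv, mul_assoc (J⁻¹ * M⁻¹), hTT, mul_one]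
  have hxback : L J (θξ + ε • L (Jᵀ * M * J)⁻¹ (L Jᵀ ph)) + b = x' := by
    rw [hmass, map_add, _root_.map_smul, add_right_comm, hθ, hx', hL,
      ← toEuclideanLin_mul_apply, ← mul_assoc, hJJ, one_mul]
  simp only [leapfrogStep, hgrad1, hphξ]
  refine Prod.ext ?_ ?_
  · show x' = L J (θξ + ε • L (Jᵀ * M * J)⁻¹ (L Jᵀ p - (ε / 2) • L Jᵀ g)) + b
    rw [hphξ]
    exact hxback.symm
  · show ph - (ε / 2) • gradient U x' =
      L (J⁻¹)ᵀ ((L Jᵀ p - (ε / 2) • L Jᵀ g) - (ε / 2) • gradient (fun ξ => U ((Matrix.toEuclideanLin J) ξ + b))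
        (θξ + ε • L (Jᵀ * M * J)⁻¹ (L Jᵀ p - (ε / 2) • L Jᵀ g)))
    rw [hphξ]
    rw [gradient_affine_comp U hU J b, hxback, map_sub, _root_.map_smul, hL,
      ← toEuclideanLin_mul_apply, ← toEuclideanLin_mul_apply, hTT, toEuclideanLin_one_apply,
      toEuclideanLin_one_apply]
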